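/- In the nilHecke algebra NH₂, the derivation Lₙ defined by Lₙ(x₁) = −x₁^{n+1}, Lₙ(x₂) = −x₂^{n+1}, Lₙ(ψ) = Σ_{k+l=n} x₁ᵏ x₂ˡ ψ respects the dot-slide relation ψx₁ − x₂ψ = 1: applying Lₙ to both sides as a derivation gives equal results, i.e., Lₙ(ψ)x₁ + ψ·(−x₁^{n+1}) − (−x₂^{n+1})ψ − x₂·Lₙ(ψ) = 0. -/

import Mathlib

/-- Defining relations of the nilHecke algebra NH₂ on generators x₁ (index 0),
x₂ (index 1) and ψ (index 2): ψ² = 0, ψx₁ = x₂ψ + 1, x₁ψ = ψx₂ + 1, x₁x₂ = x₂x₁. -/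
inductive NHRel : FreeAlgebra ℚ (Fin 3) → FreeAlgebra ℚ (Fin 3) → Prop
  | sq : NHRel (FreeAlgebra.ι ℚ 2 * FreeAlgebra.ι ℚ 2) 0
  | slide1 : NHRel (FreeAlgebra.ι ℚ 2 * FreeAlgebra.ι ℚ 0)
      (FreeAlgebra.ι ℚ 1 * FreeAlgebra.ι ℚ 2 + 1)
  | slide2 : NHRel (FreeAlgebra.ι ℚ 0 * FreeAlgebra.ι ℚ 2)
      (FreeAlgebra.ι ℚ 2 * FreeAlgebra.ι ℚ 1 + 1)
  | comm : NHRel (FreeAlgebra.ι ℚ 0 * FreeAlgebra.ι ℚ 1)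
      (FreeAlgebra.ι ℚ 1 * FreeAlgebra.ι ℚ 0)

/-- The nilHecke algebra on two strands. -/
abbrev NH2 := RingQuot NHRel

noncomputable def nhx1 : NH2 := RingQuot.mkAlgHom ℚ NHRel (FreeAlgebra.ι ℚ 0)
noncomputable def nhx2 : NH2 := RingQuot.mkAlgHom ℚ NHRel (FreeAlgebra.ι ℚ 1)
noncomputable def nhpsi : NH2 := RingQuot.mkAlgHom ℚ NHRel (FreeAlgebra.ι ℚ 2)

lemma nh_slide : nhpsi * nhx1 = nhx2 * nhpsi + 1 := by
  have h := RingQuot.mkAlgHom_rel ℚ NHRel.slide1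
  simpa [nhx1, nhx2, nhpsi, map_mul, map_add, map_one] using h

lemma nh_comm : Commute nhx1 nhx2 := by
  have h := RingQuot.mkAlgHom_rel ℚ NHRel.comm
  simpa [Commute, SemiconjBy, nhx1, nhx2, map_mul] using h

lemma nh_psi_pow (m : ℕ) :
    nhpsi * nhx1 ^ m
      = nhx2 ^ m * nhpsi + ∑ k ∈ Finset.range m, nhx2 ^ k * nhx1 ^ (m - 1 - k) := by
  induction m with
  | zero => simp
  | succ m ih =>
    have h0 : nhpsi * nhx1 ^ (m + 1) = (nhpsi * nhx1) * nhx1 ^ m := by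
      rw [pow_succ', ← mul_assoc]
    rw [h0, nh_slide, add_mul, one_mul, mul_assoc, ih,
      Finset.sum_range_succ']
    simp only [pow_zero, one_mul, Nat.add_sub_cancel]
    rw [mul_add, Finset.mul_sum]
    have hrw : ∀ k ∈ Finset.range m,
        nhx2 * (nhx2 ^ k * nhx1 ^ (m - 1 - k)) = nhx2 ^ (k + 1) * nhx1 ^ (m - (k + 1)) := by
      intro k hk
      have : m - (k + 1) = m - 1 - k := by omega
      rw [this, ← mul_assoc, ← pow_succ']
    rw [Finset.sum_congr rfl hrw, ← mul_assoc, ← pow_succ', Nat.sub_zero]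
    abel

/-- The derivation Lₙ with Lₙ(xᵢ) = -xᵢ^{n+1}, Lₙ(ψ) = ∑_{k+l=n} x₁ᵏx₂ˡψ respects
the dot-slide relation ψx₁ - x₂ψ = 1:
Lₙ(ψ)x₁ + ψ·(-x₁^{n+1}) - (-x₂^{n+1})·ψ - x₂·Lₙ(ψ) = 0. -/
theorem wittOp_nilHecke_dot_slide (n : ℕ) :
    (∑ k ∈ Finset.range (n + 1), nhx1 ^ k * nhx2 ^ (n - k) * nhpsi) * nhx1
      + nhpsi * (-(nhx1 ^ (n + 1)))
      - (-(nhx2 ^ (n + 1))) * nhpsi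
      - nhx2 * (∑ k ∈ Finset.range (n + 1), nhx1 ^ k * nhx2 ^ (n - k) * nhpsi)
      = 0 := by
  have h1 : (∑ k ∈ Finset.range (n + 1), nhx1 ^ k * nhx2 ^ (n - k) * nhpsi) * nhx1
      = (∑ k ∈ Finset.range (n + 1), nhx1 ^ k * nhx2 ^ (n + 1 - k) * nhpsi)
        + ∑ k ∈ Finset.range (n + 1), nhx1 ^ k * nhx2 ^ (n - k) := by
    rw [Finset.sum_mul, ← Finset.sum_add_distrib]
    refine Finset.sum_congr rfl fun k hk => ?_
    have hkn : k ≤ n := Nat.lt_succ_iff.mp (Finset.mem_range.mp hk)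
    have : n + 1 - k = (n - k) + 1 := by omega
    rw [this, mul_assoc, nh_slide, pow_succ]
    noncomm_ring
  have h4 : nhx2 * (∑ k ∈ Finset.range (n + 1), nhx1 ^ k * nhx2 ^ (n - k) * nhpsi)
      = ∑ k ∈ Finset.range (n + 1), nhx1 ^ k * nhx2 ^ (n + 1 - k) * nhpsi := by
    rw [Finset.mul_sum]
    refine Finset.sum_congr rfl fun k hk => ?_
    have hkn : k ≤ n := Nat.lt_succ_iff.mp (Finset.mem_range.mp hk)
    have hc : nhx2 * nhx1 ^ k = nhx1 ^ k * nhx2 := (nh_comm.symm.pow_right k).eq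
    have : n + 1 - k = (n - k) + 1 := by omega
    rw [this, pow_succ', ← mul_assoc, ← mul_assoc, hc]
    noncomm_ring
  have h2 : nhpsi * nhx1 ^ (n + 1)
      = nhx2 ^ (n + 1) * nhpsi + ∑ k ∈ Finset.range (n + 1), nhx2 ^ k * nhx1 ^ (n - k) := by
    rw [nh_psi_pow]
    simp only [Nat.add_sub_cancel]
  have h3 : ∑ k ∈ Finset.range (n + 1), nhx2 ^ k * nhx1 ^ (n - k)
      = ∑ k ∈ Finset.range (n + 1), nhx1 ^ k * nhx2 ^ (n - k) := by
    rw [← Finset.sum_range_reflect]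
    refine Finset.sum_congr rfl fun k hk => ?_
    have hkn : k ≤ n := Nat.lt_succ_iff.mp (Finset.mem_range.mp hk)
    have h5 : n + 1 - 1 - k = n - k := by omega
    have h6 : n - (n - k) = k := by omega
    rw [h5, h6]
    exact ((nh_comm.symm.pow_pow (n-k) k).eq)
  have mn : ∀ x y : NH2, x * -y = -(x * y) := fun x y => mul_neg x y
  have nm : ∀ x y : NH2, (-x) * y = -(x * y) := fun x y => neg_mul x y
  rw [h1, h4, mn, nm, h2, h3]
  abel
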